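/- Let A ~ PE(a, b, n-(a+b)) be Pólya-Eggenberger distributed with 1 ≤ a ≤ b. Then for a sufficiently large constant c_p > 1, Pr[A > (n/(a+b))·(3a + c_p·log n)] < 2n^(-2). -/

import Mathlib

set_option maxHeartbeats 1000000
open Finset

/-- Probability that the Pólya–Eggenberger process starting with `a` red and
`b` blue balls adds exactly `j` red balls during `m` steps. -/
noncomputable def pePMF (a b m j : ℕ) : ℝ :=
  (m.choose j : ℝ) * (Nat.ascFactorial a j : ℝ) * (Nat.ascFactorial b (m - j) : ℝ) /
    (Nat.ascFactorial (a + b) m : ℝ)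

/-- `Pr[PE(a,b,m) > t]`: the total number of red balls is above `t`. -/
noncomputable def peTailGT (a b m : ℕ) (t : ℝ) : ℝ :=
  ∑ j ∈ Finset.range (m + 1), if t < ((a + j : ℕ) : ℝ) then pePMF a b m j else 0


lemma ascFactorial_eq_prod (n k : ℕ) : n.ascFactorial k = ∏ i ∈ Finset.range k, (n + i) := by
  induction k with
  | zero => rfl
  | succ k ih => rw [Nat.ascFactorial_succ, Finset.prod_range_succ, ih, mul_comm]

lemma ascFactorial_add' (n j k : ℕ) :
    n.ascFactorial (j + k) = n.ascFactorial j * (n + j).ascFactorial k := by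
  induction k with
  | zero => simp
  | succ k ih =>
    rw [← Nat.add_assoc, Nat.ascFactorial_succ, Nat.ascFactorial_succ, ih]
    ring

lemma vandermonde_asc (x y : ℕ) : ∀ N : ℕ,
    ∑ k ∈ range (N + 1), N.choose k * (x.ascFactorial k * y.ascFactorial (N - k))
      = (x + y).ascFactorial N := by
  intro N
  induction N with
  | zero => simp
  | succ N ih =>
    rw [Finset.sum_range_succ']
    have h1 : ∀ k ∈ range (N + 1),
        (N + 1).choose (k + 1) * (x.ascFactorial (k + 1) * y.ascFactorial (N + 1 - (k + 1)))
          = N.choose k * ((x + k) * (x.ascFactorial k * y.ascFactorial (N - k)))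
            + N.choose (k + 1) * (x.ascFactorial (k + 1) * y.ascFactorial (N - k)) := by
      intro k hk
      rw [Nat.choose_succ_succ, Nat.add_mul, Nat.succ_sub_succ]
      congr 1
      rw [Nat.ascFactorial_succ]
      ring
    rw [Finset.sum_congr rfl h1, Finset.sum_add_distrib]
    have h2 : ∑ k ∈ range (N + 1), N.choose (k + 1) * (x.ascFactorial (k + 1) * y.ascFactorial (N - k))
          + (N + 1).choose 0 * (x.ascFactorial 0 * y.ascFactorial (N + 1 - 0))
        = ∑ k ∈ range (N + 1), N.choose k * ((y + (N - k)) * (x.ascFactorial k * y.ascFactorial (N - k))) := by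
      have e1 := Finset.sum_range_succ' (fun k => N.choose k * (x.ascFactorial k * y.ascFactorial (N + 1 - k))) (N + 1)
      have e2 : ∑ k ∈ range (N + 1 + 1), N.choose k * (x.ascFactorial k * y.ascFactorial (N + 1 - k))
          = ∑ k ∈ range (N + 1), N.choose k * (x.ascFactorial k * y.ascFactorial (N + 1 - k)) := by
        rw [Finset.sum_range_succ, Nat.choose_succ_self, zero_mul, add_zero]
      simp only [Nat.succ_sub_succ] at e1
      simp only [Nat.choose_zero_right]
      simp only [Nat.choose_zero_right] at e1
      rw [← e1, e2]
      refine Finset.sum_congr rfl fun k hk => ?_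
      have hkN : k ≤ N := Nat.lt_succ_iff.mp (Finset.mem_range.mp hk)
      have : N + 1 - k = (N - k) + 1 := by omega
      rw [this, Nat.ascFactorial_succ]
      ring
    rw [add_assoc] at *
    rw [h2, ← Finset.sum_add_distrib]
    have h3 : ∀ k ∈ range (N + 1),
        N.choose k * ((x + k) * (x.ascFactorial k * y.ascFactorial (N - k)))
          + N.choose k * ((y + (N - k)) * (x.ascFactorial k * y.ascFactorial (N - k)))
        = (x + y + N) * (N.choose k * (x.ascFactorial k * y.ascFactorial (N - k))) := by
      intro k hk
      have hkN : k ≤ N := Nat.lt_succ_iff.mp (Finset.mem_range.mp hk)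
      have : (x + k) + (y + (N - k)) = x + y + N := by omega
      rw [← Nat.mul_add, ← Nat.add_mul, this]
      ring
    rw [Finset.sum_congr rfl h3, ← Finset.mul_sum, ih, Nat.ascFactorial_succ, Nat.mul_comm]

lemma pe_moment (a b m J : ℕ) (hJ : J ≤ m) :
    ∑ i ∈ range (m + 1), i.choose J * (m.choose i * (a.ascFactorial i * b.ascFactorial (m - i)))
      = m.choose J * (a.ascFactorial J * (a + J + b).ascFactorial (m - J)) := by
  have hsplit : m + 1 = J + (m - J + 1) := by omega
  rw [hsplit, Finset.sum_range_add]
  have h0 : ∑ i ∈ range J, i.choose J * (m.choose i * (a.ascFactorial i * b.ascFactorial (m - i))) = 0 := by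
    refine Finset.sum_eq_zero fun i hi => ?_
    rw [Nat.choose_eq_zero_of_lt (Finset.mem_range.mp hi), zero_mul]
  rw [h0, zero_add]
  have h1 : ∀ r ∈ range (m - J + 1),
      (J + r).choose J * (m.choose (J + r) * (a.ascFactorial (J + r) * b.ascFactorial (m - (J + r))))
        = m.choose J * (a.ascFactorial J * ((m - J).choose r * ((a + J).ascFactorial r * b.ascFactorial (m - J - r)))) := by
    intro r hr
    have hrm : J + r ≤ m := by
      have := Finset.mem_range.mp hr; omega
    have hc : m.choose (J + r) * (J + r).choose J = m.choose J * (m - J).choose r := by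
      have := Nat.choose_mul (n := m) (Nat.le_add_right J r)
      simpa using this
    have ha : a.ascFactorial (J + r) = a.ascFactorial J * (a + J).ascFactorial r :=
      ascFactorial_add' a J r
    have hb : m - (J + r) = m - J - r := by omega
    rw [ha, hb, ← Nat.mul_assoc, Nat.mul_comm ((J+r).choose J), hc]
    ring
  rw [Finset.sum_congr rfl h1, ← Finset.mul_sum, ← Finset.mul_sum, vandermonde_asc]

lemma asc_pos (n k : ℕ) (hn : 0 < n) : 0 < n.ascFactorial k := by
  rw [ascFactorial_eq_prod]
  exact Finset.prod_pos fun i _ => by omega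

lemma key_ineq (nR aR JR KR sR LR : ℝ) (h1 : 3 * aR ≤ LR) (h2 : JR ≤ LR / 24)
    (h3 : 2 / 3 * (nR * LR) ≤ KR * sR) (h4 : JR * sR ≤ nR * LR / 24)
    (h5 : 0 < nR) (h6 : 0 ≤ LR) :
    nR * (aR + JR) ≤ 5 / 6 * ((KR - JR) * sR) := by
  have hna : nR * (3 * aR) ≤ nR * LR := mul_le_mul_of_nonneg_left h1 h5.le
  have hnJ : nR * JR ≤ nR * (LR / 24) := mul_le_mul_of_nonneg_left h2 h5.le
  have hnL : 0 ≤ nR * LR := mul_nonneg h5.le h6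
  nlinarith [hna, hnJ, hnL, h3, h4]

/-- Tail bound for the Pólya–Eggenberger distribution with small initial red
count: for a sufficiently large constant `c_p > 1`,
`Pr[PE(a,b,n-(a+b)) > (n/(a+b))·(3a + c_p·log n)] < 2n⁻²`. -/
theorem polya_eggenberger_small_support_tail :
    ∃ cp : ℝ, 1 < cp ∧
      ∀ a b n : ℕ, 1 ≤ a → a ≤ b → a + b ≤ n →
        peTailGT a b (n - (a + b))
            (((n : ℝ) / ((a : ℝ) + b)) * (3 * (a : ℝ) + cp * Real.log n)) <
          2 / (n : ℝ) ^ 2 := by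
  refine ⟨1000, by norm_num, ?_⟩
  intro a b n ha hab hsn
  set s := a + b with hs
  set m := n - s with hm
  set L : ℝ := 3 * (a : ℝ) + 1000 * Real.log n with hL
  set t : ℝ := ((n : ℝ) / ((a : ℝ) + (b : ℝ))) * L with ht
  have hsab : ((a : ℝ) + b) = (s : ℝ) := by push_cast [hs]; ring
  have hn2 : 2 ≤ n := by omega
  have hnR : (2 : ℝ) ≤ (n : ℝ) := by exact_mod_cast hn2
  have hnpos : (0 : ℝ) < n := by linarith
  have hspos : (0 : ℝ) < s := by
    have : 2 ≤ s := by omega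
    have : (2 : ℝ) ≤ (s : ℝ) := by exact_mod_cast this
    linarith
  have hsnR : (s : ℝ) ≤ n := by exact_mod_cast hsn
  have hlogn : (0.69 : ℝ) < Real.log n := by
    have h2 : Real.log 2 ≤ Real.log n := Real.log_le_log (by norm_num) hnR
    have := Real.log_two_gt_d9
    linarith
  have haR : (1:ℝ) ≤ (a:ℝ) := by exact_mod_cast ha
  have haL : 3 * (a : ℝ) ≤ L := by rw [hL]; linarith
  have hLbig : 1000 * Real.log n ≤ L := by
    have : (0:ℝ) ≤ (a:ℝ) := Nat.cast_nonneg a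
    rw [hL]; linarith
  have hLpos : (600 : ℝ) < L := by rw [hL]; linarith
  have hns1 : (1 : ℝ) ≤ (n : ℝ) / s := (one_le_div hspos).mpr hsnR
  set K : ℕ := ⌈t - (a : ℝ)⌉₊ with hK
  set J : ℕ := ⌊L / 24⌋₊ with hJ
  have hJle : (J : ℝ) ≤ L / 24 := Nat.floor_le (by positivity)
  have hJgt : L / 24 - 1 < (J : ℝ) := by
    have := Nat.lt_floor_add_one (L / 24); linarith
  have hta : (2 / 3) * ((n : ℝ) / s * L) ≤ t - a := by
    rw [ht, hsab]
    have h1 : (a : ℝ) ≤ L / 3 := by linarith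
    have h2 := mul_le_mul_of_nonneg_right hns1 (show (0:ℝ) ≤ L / 3 by linarith)
    rw [one_mul] at h2
    have h3 : (n : ℝ) / s * (L / 3) = ((n:ℝ) / s * L) / 3 := by ring
    rw [h3] at h2
    linarith
  have hKge : (2 / 3) * ((n : ℝ) / s * L) ≤ (K : ℝ) := le_trans hta (Nat.le_ceil _)
  have hKsL : (2 / 3) * ((n : ℝ) * L) ≤ (K : ℝ) * s := by
    have := mul_le_mul_of_nonneg_right hKge (le_of_lt hspos)
    calc (2 / 3) * ((n : ℝ) * L) = (2 / 3 * ((n : ℝ) / s * L)) * s := by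
          field_simp
      _ ≤ (K : ℝ) * s := this
  have hJK : J ≤ K := by
    have : (J : ℝ) ≤ (K : ℝ) := by
      have hnsL := mul_le_mul_of_nonneg_right hns1 (show (0:ℝ) ≤ L by linarith)
      rw [one_mul] at hnsL
      linarith
    exact Nat.cast_le.mp this
  -- tail terms: condition implies K ≤ i
  have hcond : ∀ i : ℕ, t < ((a + i : ℕ) : ℝ) → K ≤ i := by
    intro i hi
    rw [hK]
    refine Nat.ceil_le.mpr ?_
    push_cast at hi
    linarith
  by_cases hKm : K ≤ m
  case neg =>
    have hzero : peTailGT a b m t = 0 := by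
      rw [peTailGT]
      refine Finset.sum_eq_zero fun i hi => ?_
      rw [if_neg]
      intro hti
      have := hcond i hti
      have : i ≤ m := Nat.lt_succ_iff.mp (Finset.mem_range.mp hi)
      omega
    rw [hzero]
    positivity
  case pos =>
    have hJm : J ≤ m := le_trans hJK hKm
    have hCKJ : (0 : ℝ) < (K.choose J : ℝ) := by
      exact_mod_cast Nat.choose_pos hJK
    have hsaJ : (0 : ℝ) < (s.ascFactorial J : ℝ) := by
      exact_mod_cast asc_pos s J (by omega)
    have hsam : (0 : ℝ) < (s.ascFactorial m : ℝ) := by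
      exact_mod_cast asc_pos s m (by omega)
    have hX : (0 : ℝ) < ((s + J).ascFactorial (m - J) : ℝ) := by
      exact_mod_cast asc_pos (s + J) (m - J) (by omega)
    -- Step 1: Markov
    have step1 : peTailGT a b m t * (K.choose J : ℝ)
        ≤ ∑ i ∈ range (m + 1), (i.choose J : ℝ) * pePMF a b m i := by
      rw [peTailGT, Finset.sum_mul]
      refine Finset.sum_le_sum fun i hi => ?_
      have hpm : 0 ≤ pePMF a b m i := by
        rw [pePMF]; positivity
      by_cases hc : t < ((a + i : ℕ) : ℝ)
      · rw [if_pos hc]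
        have h1 : (K.choose J : ℝ) ≤ (i.choose J : ℝ) := by
          exact_mod_cast Nat.choose_le_choose J (hcond i hc)
        calc pePMF a b m i * (K.choose J : ℝ)
            ≤ pePMF a b m i * (i.choose J : ℝ) := mul_le_mul_of_nonneg_left h1 hpm
          _ = (i.choose J : ℝ) * pePMF a b m i := mul_comm _ _
      · rw [if_neg hc, zero_mul]
        positivity
    -- Step 2: identity
    have step2 : ∑ i ∈ range (m + 1), (i.choose J : ℝ) * pePMF a b m i
        = ((m.choose J * (a.ascFactorial J * (a + J + b).ascFactorial (m - J)) : ℕ) : ℝ)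
            / (s.ascFactorial m : ℝ) := by
      have : ∀ i ∈ range (m + 1), (i.choose J : ℝ) * pePMF a b m i
          = ((i.choose J * (m.choose i * (a.ascFactorial i * b.ascFactorial (m - i))) : ℕ) : ℝ)
              / (s.ascFactorial m : ℝ) := by
        intro i hi
        rw [pePMF]
        push_cast
        ring
      rw [Finset.sum_congr rfl this, ← Finset.sum_div, ← Nat.cast_sum,
        pe_moment a b m J hJm]
    -- simplify step2 RHS
    have hsrw : (s.ascFactorial m : ℝ)
        = (s.ascFactorial J : ℝ) * ((s + J).ascFactorial (m - J) : ℝ) := by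
      have hmJ : s.ascFactorial m = s.ascFactorial J * (s + J).ascFactorial (m - J) := by
        conv_lhs => rw [show m = J + (m - J) by omega]
        exact ascFactorial_add' s J (m - J)
      rw [hmJ]
      push_cast
      ring
    have haJb : a + J + b = s + J := by omega
    have step3 : ((m.choose J * (a.ascFactorial J * (a + J + b).ascFactorial (m - J)) : ℕ) : ℝ)
            / (s.ascFactorial m : ℝ)
        = (m.choose J : ℝ) * (a.ascFactorial J : ℝ) / (s.ascFactorial J : ℝ) := by
      rw [haJb, hsrw]
      push_cast
      rw [show (m.choose J : ℝ) * ((a.ascFactorial J : ℝ) * ((s + J).ascFactorial (m - J) : ℝ))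
          = ((m.choose J : ℝ) * (a.ascFactorial J : ℝ)) * ((s + J).ascFactorial (m - J) : ℝ) by ring]
      exact mul_div_mul_right _ _ (ne_of_gt hX)
    have h4 : peTailGT a b m t * (K.choose J : ℝ)
        ≤ (m.choose J : ℝ) * (a.ascFactorial J : ℝ) / (s.ascFactorial J : ℝ) :=
      step1.trans (le_of_eq (step2.trans step3))
    have hchain : peTailGT a b m t
        ≤ (m.choose J : ℝ) * (a.ascFactorial J : ℝ)
            / ((s.ascFactorial J : ℝ) * (K.choose J : ℝ)) := by
      rw [le_div_iff₀ (mul_pos hsaJ hCKJ)]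
      calc peTailGT a b m t * ((s.ascFactorial J : ℝ) * (K.choose J : ℝ))
          = (peTailGT a b m t * (K.choose J : ℝ)) * (s.ascFactorial J : ℝ) := by ring
        _ ≤ ((m.choose J : ℝ) * (a.ascFactorial J : ℝ) / (s.ascFactorial J : ℝ))
              * (s.ascFactorial J : ℝ) := by
            refine mul_le_mul_of_nonneg_right h4 hsaJ.le
        _ = (m.choose J : ℝ) * (a.ascFactorial J : ℝ) :=
            div_mul_cancel₀ _ (ne_of_gt hsaJ)
    -- Step 4: product bound
    have hfact : (0:ℝ) < (Nat.factorial J : ℝ) := by exact_mod_cast Nat.factorial_pos J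
    have hKJR : (0:ℝ) ≤ (K:ℝ) - (J:ℝ) := by
      have : (J:ℝ) ≤ (K:ℝ) := by exact_mod_cast hJK
      linarith
    have hprod : ∀ i ∈ range J,
        ((m - i : ℕ) : ℝ) * ((a + i : ℕ) : ℝ)
          ≤ (5/6 : ℝ) * (((K - i : ℕ) : ℝ) * ((s + i : ℕ) : ℝ)) := by
      intro i hi
      have hiJ : i < J := Finset.mem_range.mp hi
      have hiJR : (i:ℝ) ≤ (J:ℝ) := by exact_mod_cast hiJ.le
      have h1 : ((m - i : ℕ) : ℝ) ≤ (n : ℝ) := by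
        have : m - i ≤ n := by omega
        exact_mod_cast this
      have h2 : ((a + i : ℕ) : ℝ) ≤ (a : ℝ) + J := by push_cast; linarith
      have h3 : (K : ℝ) - (J : ℝ) ≤ ((K - i : ℕ) : ℝ) := by
        have hiK : i ≤ K := le_trans hiJ.le hJK
        rw [Nat.cast_sub hiK]
        linarith
      have h4 : (s : ℝ) ≤ ((s + i : ℕ) : ℝ) := by
        push_cast
        have : (0:ℝ) ≤ (i:ℝ) := Nat.cast_nonneg i
        linarith
      have hJs : (J : ℝ) * s ≤ (n : ℝ) * L / 24 := by
        calc (J:ℝ) * s ≤ (L/24) * n :=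
              mul_le_mul hJle hsnR hspos.le (by linarith)
          _ = (n:ℝ) * L / 24 := by ring
      have key : (n : ℝ) * ((a : ℝ) + J) ≤ (5/6) * (((K : ℝ) - J) * s) :=
        key_ineq (n:ℝ) (a:ℝ) (J:ℝ) (K:ℝ) (s:ℝ) L haL (by linarith) hKsL hJs hnpos
          (by linarith)
      have hcast1 : (0:ℝ) ≤ ((m - i : ℕ) : ℝ) := Nat.cast_nonneg _
      have hcast2 : (0:ℝ) ≤ ((a + i : ℕ) : ℝ) := Nat.cast_nonneg _
      calc ((m - i : ℕ) : ℝ) * ((a + i : ℕ) : ℝ)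
          ≤ (n : ℝ) * ((a : ℝ) + J) := by
            have haJ0 : (0:ℝ) ≤ (a:ℝ) + J := by positivity
            exact mul_le_mul h1 h2 hcast2 hnpos.le
        _ ≤ (5/6) * (((K : ℝ) - J) * s) := key
        _ ≤ (5/6 : ℝ) * (((K - i : ℕ) : ℝ) * ((s + i : ℕ) : ℝ)) := by
            have := mul_le_mul h3 h4 hspos.le (le_trans hKJR h3)
            linarith
    have e1 : (J.factorial * m.choose J) * a.ascFactorial J
        = ∏ i ∈ range J, ((m - i) * (a + i)) := by
      rw [← Nat.descFactorial_eq_factorial_mul_choose, Nat.descFactorial_eq_prod_range,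
        ascFactorial_eq_prod, ← Finset.prod_mul_distrib]
    have e2 : (J.factorial * K.choose J) * s.ascFactorial J
        = ∏ i ∈ range J, ((K - i) * (s + i)) := by
      rw [← Nat.descFactorial_eq_factorial_mul_choose, Nat.descFactorial_eq_prod_range,
        ascFactorial_eq_prod, ← Finset.prod_mul_distrib]
    have step4 : (m.choose J : ℝ) * (a.ascFactorial J : ℝ)
        ≤ (5/6 : ℝ) ^ J * ((s.ascFactorial J : ℝ) * (K.choose J : ℝ)) := by
      have h : (J.factorial : ℝ) * ((m.choose J : ℝ) * (a.ascFactorial J : ℝ))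
          ≤ (J.factorial : ℝ) * ((5/6 : ℝ) ^ J * ((s.ascFactorial J : ℝ) * (K.choose J : ℝ))) := by
        calc (J.factorial : ℝ) * ((m.choose J : ℝ) * (a.ascFactorial J : ℝ))
            = (((J.factorial * m.choose J) * a.ascFactorial J : ℕ) : ℝ) := by push_cast; ring
          _ = ((∏ i ∈ range J, ((m - i) * (a + i)) : ℕ) : ℝ) := by rw [e1]
          _ = ∏ i ∈ range J, (((m - i : ℕ) : ℝ) * ((a + i : ℕ) : ℝ)) := by
              rw [Nat.cast_prod]; exact Finset.prod_congr rfl fun i _ => by push_cast; ring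
          _ ≤ ∏ i ∈ range J, ((5/6 : ℝ) * (((K - i : ℕ) : ℝ) * ((s + i : ℕ) : ℝ))) :=
              Finset.prod_le_prod (fun i _ => by positivity) hprod
          _ = (5/6 : ℝ) ^ J * ∏ i ∈ range J, (((K - i : ℕ) : ℝ) * ((s + i : ℕ) : ℝ)) := by
              rw [Finset.prod_mul_distrib, Finset.prod_const, Finset.card_range]
          _ = (5/6 : ℝ) ^ J * ((∏ i ∈ range J, ((K - i) * (s + i)) : ℕ) : ℝ) := by
              rw [Nat.cast_prod]
              congr 1
              exact Finset.prod_congr rfl fun i _ => by push_cast; ring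
          _ = (J.factorial : ℝ) * ((5/6 : ℝ) ^ J * ((s.ascFactorial J : ℝ) * (K.choose J : ℝ))) := by
              rw [← e2]; push_cast; ring
      exact le_of_mul_le_mul_left h hfact
    -- Step 5: numerics
    have hJlog : 12 * Real.log n ≤ (J : ℝ) := by linarith
    have step5 : (5/6 : ℝ) ^ J < 2 / (n : ℝ) ^ 2 := by
      have h56 : (5/6 : ℝ) ≤ Real.exp (-(1/6)) := by
        have h := Real.log_le_sub_one_of_pos (show (0:ℝ) < 5/6 by norm_num)
        calc (5/6:ℝ) = Real.exp (Real.log (5/6)) := (Real.exp_log (by norm_num)).symm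
          _ ≤ Real.exp (-(1/6)) := Real.exp_le_exp.mpr (by norm_num at h ⊢; linarith)
      have hnsq : (0:ℝ) < (n:ℝ)^2 := by positivity
      calc (5/6:ℝ)^J ≤ (Real.exp (-(1/6)))^J := pow_le_pow_left₀ (by norm_num) h56 J
        _ = Real.exp ((J:ℝ) * (-(1/6))) := (Real.exp_nat_mul _ J).symm
        _ ≤ Real.exp (-(2 * Real.log n)) := Real.exp_le_exp.mpr (by linarith)
        _ = 1 / (n:ℝ)^2 := by
            rw [Real.exp_neg,
              show (2:ℝ) * Real.log n = Real.log ((n:ℝ)^2) by rw [Real.log_pow]; push_cast; ring,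
              Real.exp_log hnsq, one_div]
        _ < 2 / (n:ℝ)^2 := by
            rw [div_lt_div_iff₀ hnsq hnsq]
            linarith
    calc peTailGT a b m t
        ≤ (m.choose J : ℝ) * (a.ascFactorial J : ℝ)
            / ((s.ascFactorial J : ℝ) * (K.choose J : ℝ)) := hchain
      _ ≤ (5/6 : ℝ) ^ J := by
          rw [div_le_iff₀ (mul_pos hsaJ hCKJ)]
          exact step4
      _ < 2 / (n : ℝ) ^ 2 := step5
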